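/- The function field trivialization identity for the multiplicative degeneration: in $\mathbb{C}[X,Y][[q]]/(XY-q)$ with relations $X_{i-1} = qX_i$, $Y_{i+1} = qY_i$, $X_iY_i = 1$ on overlaps, the infinite products $\tilde G_{i+1/2} = \prod_{j=0}^{\infty}\frac{1 - q^j z y_0 X_i}{1 - q^j y_0 X_i} \prod_{j=0}^{\infty}\frac{1 - q^j z^{-1} y_0^{-1} Y_{i+1}}{1 - q^j y_0^{-1} Y_{i+1}}$ converge $q$-adically, and satisfy the cocycle relation $\tilde G_{i+1/2}/\tilde G_{i-1/2} = z$ on the overlap chart, so that $G_{i+1/2} := z^{-i}\tilde G_{i+1/2}$ satisfies $G\circ \mathfrak{tr} = z^{-1} G$ where $\mathfrak{tr}$ is the index shift $i \mapsto i+1$. -/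

import Mathlib

noncomputable section

/-- The overlap chart ring `V_i = ℂ[Y^±][[q]]` of the universal cover of the Tate curve,
with `Y = Y_i`; on it `X_i = Y⁻¹`, `Y_{i+1} = qY`, `X_{i-1} = qY⁻¹`. -/
abbrev BT : Type := PowerSeries (LaurentPolynomial ℂ)

/-- The element `q`. -/
def qB : BT := PowerSeries.X

/-- The coordinate `Y = Y_i` on the overlap. -/
def Yc : BT := PowerSeries.C (LaurentPolynomial.T 1)

/-- Its inverse `Y⁻¹ = X_i`. -/
def Ycinv : BT := PowerSeries.C (LaurentPolynomial.T (-1))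

/-- The inclusion `ℂ[[q]] → ℂ[Y^±][[q]]`. -/
def ιB : PowerSeries ℂ →+* BT := PowerSeries.map (algebraMap ℂ (LaurentPolynomial ℂ))

/-- `f : ℕ → BT` tends to `L` in the `q`-adic topology. -/
def QTends (f : ℕ → BT) (L : BT) : Prop :=
  ∀ n : ℕ, ∃ N₀ : ℕ, ∀ m ≥ N₀, ∀ k < n,
    PowerSeries.coeff k (f m) = PowerSeries.coeff k L

/-! ### Auxiliary lemmas -/

lemma coeff_eq_of_X_pow_dvd {a b : BT} {n k : ℕ}
    (h : (PowerSeries.X : BT) ^ n ∣ a - b) (hk : k < n) :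
    PowerSeries.coeff k a = PowerSeries.coeff k b := by
  have := (PowerSeries.X_pow_dvd_iff.mp h) k hk
  rw [map_sub, sub_eq_zero] at this
  exact this

lemma dvd_prod_sub_one {n : ℕ} {f : ℕ → BT} {s : Finset ℕ}
    (h : ∀ j ∈ s, (PowerSeries.X : BT) ^ n ∣ f j - 1) :
    (PowerSeries.X : BT) ^ n ∣ (∏ j ∈ s, f j) - 1 := by
  classical
  induction s using Finset.cons_induction with
  | empty => simp
  | cons a s ha ih =>
    rw [Finset.prod_cons]
    have h1 := h a (Finset.mem_cons_self a s)
    have h2 := ih (fun j hj => h j (Finset.mem_cons_of_mem hj))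
    have key : f a * ∏ j ∈ s, f j - 1 = f a * ((∏ j ∈ s, f j) - 1) + (f a - 1) := by ring
    rw [key]
    exact dvd_add (Dvd.dvd.mul_left h2 _) h1

lemma fac_dvd (N : ℕ) (a b : BT) :
    (PowerSeries.X : BT) ^ N ∣
      (1 - PowerSeries.X ^ N * a) * (1 - PowerSeries.X ^ N * b) - 1 :=
  ⟨PowerSeries.X ^ N * (a * b) - a - b, by ring⟩

lemma exists_qtends_prod (f : ℕ → BT) (hf : ∀ j, (PowerSeries.X : BT) ^ j ∣ f j - 1) :
    ∃ L, QTends (fun N => ∏ j ∈ Finset.range N, f j) L := by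
  classical
  refine ⟨PowerSeries.mk (fun k =>
    PowerSeries.coeff k (∏ j ∈ Finset.range (k + 1), f j)), ?_⟩
  intro n
  refine ⟨n, fun m hm k hk => ?_⟩
  rw [PowerSeries.coeff_mk]
  have hkm : k + 1 ≤ m := by omega
  have hdvd : (PowerSeries.X : BT) ^ (k + 1) ∣
      (∏ j ∈ Finset.range m, f j) - ∏ j ∈ Finset.range (k + 1), f j := by
    rw [← Finset.prod_range_mul_prod_Ico f hkm]
    have h1 : (PowerSeries.X : BT) ^ (k + 1) ∣ (∏ j ∈ Finset.Ico (k + 1) m, f j) - 1 := by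
      apply dvd_prod_sub_one
      intro j hj
      exact dvd_trans (pow_dvd_pow _ (Finset.mem_Ico.mp hj).1) (hf j)
    obtain ⟨c, hc⟩ := h1
    exact ⟨(∏ j ∈ Finset.range (k + 1), f j) * c, by
      linear_combination (∏ j ∈ Finset.range (k + 1), f j) * hc⟩
  exact coeff_eq_of_X_pow_dvd hdvd (Nat.lt_succ_self k)

lemma exists_lim (a b : BT) :
    ∃ L, QTends (fun N =>
      (∏ j ∈ Finset.range N, (1 - PowerSeries.X ^ j * a)) *
      (∏ j ∈ Finset.range N, (1 - PowerSeries.X ^ j * b))) L := by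
  obtain ⟨L, hL⟩ := exists_qtends_prod
    (fun j => (1 - PowerSeries.X ^ j * a) * (1 - PowerSeries.X ^ j * b))
    (fun j => fac_dvd j a b)
  refine ⟨L, ?_⟩
  simpa only [Finset.prod_mul_distrib] using hL

lemma qtends_mul {f g : ℕ → BT} {L M : BT} (hf : QTends f L) (hg : QTends g M) :
    QTends (fun N => f N * g N) (L * M) := by
  intro n
  obtain ⟨N₁, h₁⟩ := hf n
  obtain ⟨N₂, h₂⟩ := hg n
  refine ⟨max N₁ N₂, fun m hm k hk => ?_⟩
  simp only [PowerSeries.coeff_mul]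
  refine Finset.sum_congr rfl fun p hp => ?_
  have hp' := Finset.HasAntidiagonal.mem_antidiagonal.mp hp
  have h1 := h₁ m (le_trans (le_max_left _ _) hm) p.1 (lt_of_le_of_lt (by omega) hk)
  have h2 := h₂ m (le_trans (le_max_right _ _) hm) p.2 (lt_of_le_of_lt (by omega) hk)
  rw [h1, h2]

lemma qtends_const (c : BT) : QTends (fun _ => c) c :=
  fun _ => ⟨0, fun _ _ _ _ => rfl⟩

lemma qtends_const_mul {f : ℕ → BT} {L : BT} (c : BT) (hf : QTends f L) :
    QTends (fun N => c * f N) (c * L) :=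
  qtends_mul (qtends_const c) hf

lemma qtends_congr_dvd {f f' : ℕ → BT} {L : BT}
    (h : ∀ N, (PowerSeries.X : BT) ^ N ∣ f' N - f N) (hf : QTends f L) : QTends f' L := by
  intro n
  obtain ⟨N₀, h₀⟩ := hf n
  refine ⟨max N₀ n, fun m hm k hk => ?_⟩
  have hk' : k < m := lt_of_lt_of_le hk (le_trans (le_max_right _ _) hm)
  rw [coeff_eq_of_X_pow_dvd (h m) hk']
  exact h₀ m (le_trans (le_max_left _ _) hm) k hk

lemma qtends_mul_tail {f : ℕ → BT} {L : BT} (hf : QTends f L) (a b : BT) :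
    QTends (fun N => f N *
      ((1 - PowerSeries.X ^ N * a) * (1 - PowerSeries.X ^ N * b))) L := by
  refine qtends_congr_dvd (fun N => ?_) hf
  obtain ⟨c, hc⟩ := fac_dvd N a b
  exact ⟨f N * c, by linear_combination (f N) * hc⟩

lemma qtends_unique' {f g : ℕ → BT} {L M : BT} (hf : QTends f L) (hg : QTends g M)
    (h : ∀ N, f N = g N) : L = M := by
  ext k
  obtain ⟨N₁, h₁⟩ := hf (k + 1)
  obtain ⟨N₂, h₂⟩ := hg (k + 1)
  have e1 := h₁ (max N₁ N₂) (le_max_left _ _) k (Nat.lt_succ_self k)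
  have e2 := h₂ (max N₁ N₂) (le_max_right _ _) k (Nat.lt_succ_self k)
  rw [← e1, h (max N₁ N₂), e2]

lemma shift_prod (N : ℕ) (c : BT) :
    (∏ j ∈ Finset.range N, (1 - PowerSeries.X ^ j * c)) * (1 - PowerSeries.X ^ N * c)
      = (∏ j ∈ Finset.range N, (1 - PowerSeries.X ^ j * (PowerSeries.X * c))) * (1 - c) := by
  rw [← Finset.prod_range_succ (fun j => 1 - PowerSeries.X ^ j * c) N,
    Finset.prod_range_succ']
  refine congrArg₂ (· * ·) ?_ ?_
  · exact Finset.prod_congr rfl fun j _ => by ring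
  · simp

lemma pointwise_key (N : ℕ) (Zc α β γ δ : BT)
    (hs : (1 - α) * (1 - δ) = Zc * ((1 - β) * (1 - γ))) :
    ((∏ j ∈ Finset.range N, (1 - PowerSeries.X ^ j * α)) *
      (∏ j ∈ Finset.range N, (1 - PowerSeries.X ^ j * (PowerSeries.X * β)))) *
    ((∏ j ∈ Finset.range N, (1 - PowerSeries.X ^ j * (PowerSeries.X * γ))) *
      (∏ j ∈ Finset.range N, (1 - PowerSeries.X ^ j * δ))) *
    ((1 - PowerSeries.X ^ N * α) * (1 - PowerSeries.X ^ N * δ))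
  = (Zc * (((∏ j ∈ Finset.range N, (1 - PowerSeries.X ^ j * (PowerSeries.X * α))) *
      (∏ j ∈ Finset.range N, (1 - PowerSeries.X ^ j * β))) *
    ((∏ j ∈ Finset.range N, (1 - PowerSeries.X ^ j * γ)) *
      (∏ j ∈ Finset.range N, (1 - PowerSeries.X ^ j * (PowerSeries.X * δ)))))) *
    ((1 - PowerSeries.X ^ N * β) * (1 - PowerSeries.X ^ N * γ)) := by
  have e1 := shift_prod N α
  have e2 := shift_prod N δ
  have e3 := shift_prod N β
  have e4 := shift_prod N γ
  set Pa := ∏ j ∈ Finset.range N, (1 - PowerSeries.X ^ j * α)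
  set Pb := ∏ j ∈ Finset.range N, (1 - PowerSeries.X ^ j * β)
  set Pc := ∏ j ∈ Finset.range N, (1 - PowerSeries.X ^ j * γ)
  set Pd := ∏ j ∈ Finset.range N, (1 - PowerSeries.X ^ j * δ)
  set Ra := ∏ j ∈ Finset.range N, (1 - PowerSeries.X ^ j * (PowerSeries.X * α))
  set Rb := ∏ j ∈ Finset.range N, (1 - PowerSeries.X ^ j * (PowerSeries.X * β))
  set Rc := ∏ j ∈ Finset.range N, (1 - PowerSeries.X ^ j * (PowerSeries.X * γ))
  set Rd := ∏ j ∈ Finset.range N, (1 - PowerSeries.X ^ j * (PowerSeries.X * δ))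
  linear_combination (Rb * Rc * Pd * (1 - PowerSeries.X ^ N * δ)) * e1
    + (Rb * Rc * Ra * (1 - α)) * e2
    - (Zc * Ra * Rd * Pc * (1 - PowerSeries.X ^ N * γ)) * e3
    - (Zc * Ra * Rd * Rb * (1 - β)) * e4
    + (Ra * Rb * Rc * Rd) * hs

/-- The trivialization identity for the degenerating family: for units `z`, `y₀` of
`R = ℂ[[q]]`, the infinite products
`G̃_{i+1/2} = ∏_{j≥0} (1-qʲ z y₀ X_i)/(1-qʲ y₀ X_i) · ∏_{j≥0} (1-qʲ z⁻¹ y₀⁻¹ Y_{i+1})/(1-qʲ y₀⁻¹ Y_{i+1})`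
converge `q`-adically (numerators and denominators separately, on both charts, using
`X_i = Y⁻¹`, `Y_{i+1} = qY` and `X_{i-1} = qY⁻¹`, `Y_i = Y` on the overlap), and satisfy the
cocycle relation `G̃_{i+1/2}/G̃_{i-1/2} = z` (stated with denominators cleared), so that
`G_{i+1/2} := z^{-i} G̃_{i+1/2}` satisfies `G ∘ 𝔱𝔯 = z⁻¹ G` (again with denominators
cleared, using that `𝔱𝔯` pulls back the chart-`(i+1/2)` expression to the
chart-`(i-1/2)` one). -/
theorem stmt19 (z y0 : PowerSeries ℂ) (hz : IsUnit z) (hy : IsUnit y0) :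
    ∃ NUMp DENp NUMm DENm : BT,
      QTends (fun N => (∏ j ∈ Finset.range N, (1 - qB ^ j * ιB z * ιB y0 * Ycinv)) *
        (∏ j ∈ Finset.range N,
          (1 - qB ^ j * ιB ↑hz.unit⁻¹ * ιB ↑hy.unit⁻¹ * (qB * Yc)))) NUMp ∧
      QTends (fun N => (∏ j ∈ Finset.range N, (1 - qB ^ j * ιB y0 * Ycinv)) *
        (∏ j ∈ Finset.range N, (1 - qB ^ j * ιB ↑hy.unit⁻¹ * (qB * Yc)))) DENp ∧
      QTends (fun N => (∏ j ∈ Finset.range N, (1 - qB ^ j * ιB z * ιB y0 * (qB * Ycinv))) *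
        (∏ j ∈ Finset.range N,
          (1 - qB ^ j * ιB ↑hz.unit⁻¹ * ιB ↑hy.unit⁻¹ * Yc))) NUMm ∧
      QTends (fun N => (∏ j ∈ Finset.range N, (1 - qB ^ j * ιB y0 * (qB * Ycinv))) *
        (∏ j ∈ Finset.range N, (1 - qB ^ j * ιB ↑hy.unit⁻¹ * Yc))) DENm ∧
      NUMp * DENm = ιB z * NUMm * DENp ∧
      (∀ i : ℤ,
        ((Units.map ιB.toMonoidHom hz.unit ^ (-i) : BTˣ) : BT) * NUMm =
          ((Units.map ιB.toMonoidHom hz.unit)⁻¹ : BTˣ) *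
            ((Units.map ιB.toMonoidHom hz.unit ^ (-(i - 1)) : BTˣ) : BT) * NUMm) := by
  have hq : qB = (PowerSeries.X : BT) := rfl
  simp only [hq, mul_assoc]
  -- basic unit identities
  have hz1 : ιB z * ιB ↑hz.unit⁻¹ = 1 := by
    rw [← map_mul, hz.mul_val_inv, map_one]
  have hy1 : ιB y0 * ιB ↑hy.unit⁻¹ = 1 := by
    rw [← map_mul, hy.mul_val_inv, map_one]
  have hYY : Ycinv * Yc = 1 := by
    rw [Ycinv, Yc, ← map_mul, ← LaurentPolynomial.T_add]
    norm_num [LaurentPolynomial.T_zero]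
  -- the four limits
  obtain ⟨NUMp, hNp⟩ := exists_lim (ιB z * (ιB y0 * Ycinv))
    (ιB ↑hz.unit⁻¹ * (ιB ↑hy.unit⁻¹ * (PowerSeries.X * Yc)))
  obtain ⟨DENp, hDp⟩ := exists_lim (ιB y0 * Ycinv)
    (ιB ↑hy.unit⁻¹ * (PowerSeries.X * Yc))
  obtain ⟨NUMm, hNm⟩ := exists_lim (ιB z * (ιB y0 * (PowerSeries.X * Ycinv)))
    (ιB ↑hz.unit⁻¹ * (ιB ↑hy.unit⁻¹ * Yc))
  obtain ⟨DENm, hDm⟩ := exists_lim (ιB y0 * (PowerSeries.X * Ycinv))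
    (ιB ↑hy.unit⁻¹ * Yc)
  refine ⟨NUMp, DENp, NUMm, DENm, hNp, hDp, hNm, hDm, ?_, ?_⟩
  · -- cocycle relation
    set α : BT := ιB z * (ιB y0 * Ycinv) with hα
    set β : BT := ιB ↑hz.unit⁻¹ * (ιB ↑hy.unit⁻¹ * Yc) with hβ
    set γ : BT := ιB y0 * Ycinv with hγ
    set δ : BT := ιB ↑hy.unit⁻¹ * Yc with hδ
    have scalar : (1 - α) * (1 - δ) = ιB z * ((1 - β) * (1 - γ)) := by
      rw [hα, hβ, hγ, hδ]
      linear_combination (ιB ↑hy.unit⁻¹ * Yc - ιB y0 * ιB ↑hy.unit⁻¹ * (Ycinv * Yc)) * hz1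
        + ((ιB z - 1) * (Ycinv * Yc)) * hy1 + (ιB z - 1) * hYY
    have hg := qtends_mul_tail (qtends_mul hNp hDm) α δ
    have hh := qtends_mul_tail (qtends_const_mul (ιB z) (qtends_mul hNm hDp)) β γ
    refine qtends_unique' hg hh fun N => ?_
    have r2 : (∏ j ∈ Finset.range N,
        (1 - PowerSeries.X ^ j * (ιB ↑hz.unit⁻¹ * (ιB ↑hy.unit⁻¹ * (PowerSeries.X * Yc)))))
        = ∏ j ∈ Finset.range N, (1 - PowerSeries.X ^ j * (PowerSeries.X * β)) :=
      Finset.prod_congr rfl fun j _ => by rw [hβ]; ring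
    have r7 : (∏ j ∈ Finset.range N,
        (1 - PowerSeries.X ^ j * (ιB y0 * (PowerSeries.X * Ycinv))))
        = ∏ j ∈ Finset.range N, (1 - PowerSeries.X ^ j * (PowerSeries.X * γ)) :=
      Finset.prod_congr rfl fun j _ => by rw [hγ]; ring
    have r5 : (∏ j ∈ Finset.range N,
        (1 - PowerSeries.X ^ j * (ιB z * (ιB y0 * (PowerSeries.X * Ycinv)))))
        = ∏ j ∈ Finset.range N, (1 - PowerSeries.X ^ j * (PowerSeries.X * α)) :=
      Finset.prod_congr rfl fun j _ => by rw [hα]; ring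
    have r4 : (∏ j ∈ Finset.range N,
        (1 - PowerSeries.X ^ j * (ιB ↑hy.unit⁻¹ * (PowerSeries.X * Yc))))
        = ∏ j ∈ Finset.range N, (1 - PowerSeries.X ^ j * (PowerSeries.X * δ)) :=
      Finset.prod_congr rfl fun j _ => by rw [hδ]; ring
    rw [r2, r7, r5, r4]
    exact pointwise_key N (ιB z) α β γ δ scalar
  · -- translation equivariance
    intro i
    have hU : (Units.map ιB.toMonoidHom hz.unit)⁻¹ *
        Units.map ιB.toMonoidHom hz.unit ^ (-(i - 1)) =
        Units.map ιB.toMonoidHom hz.unit ^ (-i) := by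
      rw [← zpow_neg_one, ← zpow_add]
      congr 1
      ring
    rw [← mul_assoc, ← Units.val_mul, hU]

end
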